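/- There exists a constant C > 0 such that for all x₀, y₀ ∈ ℝ² one has ∫_{ℝ²} θ_{x₀}(x) θ_{y₀}(x) dx ≤ C · θ_{x₀}(y₀). -/

import Mathlib

open MeasureTheory

noncomputable def theta (x₀ x : EuclideanSpace ℝ (Fin 2)) : ℝ :=
  1 / (1 + ‖x - x₀‖ ^ 3)

lemma theta_nonneg (x₀ x : EuclideanSpace ℝ (Fin 2)) : 0 ≤ theta x₀ x := by
  unfold theta; positivity

lemma theta_cont (x₀ : EuclideanSpace ℝ (Fin 2)) : Continuous (theta x₀) := by
  unfold theta
  apply Continuous.div continuous_const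
  · fun_prop
  · intro x; positivity

lemma aux_bound {a d : ℝ} (hd : 0 ≤ d) (h : d / 2 ≤ a) :
    1 / (1 + a ^ 3) ≤ 8 / (1 + d ^ 3) := by
  have ha : 0 ≤ a := le_trans (by linarith) h
  rw [div_le_div_iff₀ (by positivity) (by positivity)]
  nlinarith [pow_le_pow_left₀ (by linarith : (0:ℝ) ≤ d / 2) h 3, pow_nonneg hd 3, pow_nonneg ha 3]

lemma key (x₀ y₀ x : EuclideanSpace ℝ (Fin 2)) :
    theta x₀ x * theta y₀ x ≤ 8 * theta x₀ y₀ * (theta x₀ x + theta y₀ x) := by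
  set d := ‖y₀ - x₀‖ with hdd
  have hd : 0 ≤ d := norm_nonneg _
  have htri : d ≤ ‖x - x₀‖ + ‖x - y₀‖ := by
    have := norm_sub_le (x - x₀) (x - y₀)
    simpa [sub_sub_sub_cancel_left] using this
  have hcase : d / 2 ≤ ‖x - x₀‖ ∨ d / 2 ≤ ‖x - y₀‖ := by
    by_contra hc
    push_neg at hc
    linarith [hc.1, hc.2]
  have hθ : theta x₀ y₀ = 1 / (1 + d ^ 3) := rfl
  rcases hcase with h | h
  · have h1 : theta x₀ x ≤ 8 * theta x₀ y₀ := by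
      rw [hθ]
      unfold theta
      rw [mul_one_div]
      exact aux_bound hd h
    have := mul_le_mul_of_nonneg_right h1 (theta_nonneg y₀ x)
    nlinarith [theta_nonneg x₀ x, theta_nonneg y₀ x, theta_nonneg x₀ y₀,
      mul_nonneg (mul_nonneg (by norm_num : (0:ℝ) ≤ 8) (theta_nonneg x₀ y₀)) (theta_nonneg x₀ x)]
  · have h1 : theta y₀ x ≤ 8 * theta x₀ y₀ := by
      rw [hθ]
      unfold theta
      rw [mul_one_div]
      exact aux_bound hd h
    have := mul_le_mul_of_nonneg_left h1 (theta_nonneg x₀ x)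
    nlinarith [theta_nonneg x₀ x, theta_nonneg y₀ x, theta_nonneg x₀ y₀,
      mul_nonneg (mul_nonneg (by norm_num : (0:ℝ) ≤ 8) (theta_nonneg x₀ y₀)) (theta_nonneg y₀ x)]

lemma theta_lintegral_eq (z : EuclideanSpace ℝ (Fin 2)) :
    ∫⁻ x, ENNReal.ofReal (theta z x) =
      ∫⁻ x : EuclideanSpace ℝ (Fin 2), ENNReal.ofReal (1 / (1 + ‖x‖ ^ 3)) := by
  have : (fun x => ENNReal.ofReal (theta z x)) =
      fun x => ENNReal.ofReal (1 / (1 + ‖x - z‖ ^ 3)) := rfl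
  rw [this]
  exact lintegral_sub_right_eq_self (fun x => ENNReal.ofReal (1 / (1 + ‖x‖ ^ 3))) z

lemma J_lt_top : ∫⁻ x : EuclideanSpace ℝ (Fin 2), ENNReal.ofReal (1 / (1 + ‖x‖ ^ 3)) < ⊤ := by
  have hint : Integrable (fun x : EuclideanSpace ℝ (Fin 2) => 8 * (1 + ‖x‖) ^ (-(3:ℝ))) := by
    refine Integrable.const_mul ?_ 8
    apply integrable_one_add_norm (μ := volume)
    simp [finrank_euclideanSpace]
    norm_num
  refine lt_of_le_of_lt (lintegral_mono fun x => ?_) hint.lintegral_lt_top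
  apply ENNReal.ofReal_le_ofReal
  have h0 : (0:ℝ) ≤ ‖x‖ := norm_nonneg _
  have hpos : (0:ℝ) < 1 + ‖x‖ := by linarith
  have hrw : ((1:ℝ) + ‖x‖) ^ (-(3:ℝ)) = ((1 + ‖x‖) ^ (3:ℕ))⁻¹ := by
    rw [← Real.rpow_natCast (1 + ‖x‖) 3, ← Real.rpow_neg hpos.le]
    norm_num
  rw [hrw, inv_eq_one_div, mul_one_div, div_le_div_iff₀ (by positivity) (by positivity)]
  nlinarith [pow_nonneg h0 3, pow_nonneg h0 2, sq_nonneg (‖x‖ - 1), mul_nonneg (mul_nonneg h0 h0) h0]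

theorem theta_convolution_estimate :
    ∃ C : ℝ, 0 < C ∧ ∀ x₀ y₀ : EuclideanSpace ℝ (Fin 2),
      ∫⁻ x, ENNReal.ofReal (theta x₀ x * theta y₀ x) ≤
        ENNReal.ofReal (C * theta x₀ y₀) := by
  set J := ∫⁻ x : EuclideanSpace ℝ (Fin 2), ENNReal.ofReal (1 / (1 + ‖x‖ ^ 3)) with hJ
  refine ⟨16 * J.toReal + 1, by positivity, fun x₀ y₀ => ?_⟩
  have hmeas : ∀ z : EuclideanSpace ℝ (Fin 2),
      Measurable fun x => ENNReal.ofReal (theta z x) := fun z =>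
    ENNReal.measurable_ofReal.comp (theta_cont z).measurable
  calc ∫⁻ x, ENNReal.ofReal (theta x₀ x * theta y₀ x)
      ≤ ∫⁻ x, ENNReal.ofReal (8 * theta x₀ y₀ * (theta x₀ x + theta y₀ x)) := by
        exact lintegral_mono fun x => ENNReal.ofReal_le_ofReal (key x₀ y₀ x)
    _ = ∫⁻ x, ENNReal.ofReal (8 * theta x₀ y₀) *
          (ENNReal.ofReal (theta x₀ x) + ENNReal.ofReal (theta y₀ x)) := by
        refine lintegral_congr fun x => ?_
        rw [ENNReal.ofReal_mul (mul_nonneg (by norm_num) (theta_nonneg x₀ y₀)), ENNReal.ofReal_add (theta_nonneg _ _) (theta_nonneg _ _)]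
    _ = ENNReal.ofReal (8 * theta x₀ y₀) * (J + J) := by
        rw [lintegral_const_mul _ (f := fun x => ENNReal.ofReal (theta x₀ x) + ENNReal.ofReal (theta y₀ x)) ((hmeas x₀).add (hmeas y₀)),
          lintegral_add_left (hmeas x₀), theta_lintegral_eq, theta_lintegral_eq]
    _ ≤ ENNReal.ofReal ((16 * J.toReal + 1) * theta x₀ y₀) := by
        have hJt : J + J = ENNReal.ofReal (2 * J.toReal) := by
          rw [ENNReal.ofReal_mul (by norm_num), ENNReal.ofReal_ofNat,
            ENNReal.ofReal_toReal J_lt_top.ne, two_mul]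
        rw [hJt, ← ENNReal.ofReal_mul (mul_nonneg (by norm_num) (theta_nonneg x₀ y₀))]
        apply ENNReal.ofReal_le_ofReal
        have := theta_nonneg x₀ y₀
        nlinarith [ENNReal.toReal_nonneg (a := J)]
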